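/- Let (Ω,Σ,Pr) be a probability space and A_i ∈ Σ for i ∈ ℕ. If S_l := Σ_{1≤i₁<…<i_l} Pr(A_{i₁}∩…∩A_{i_l}) is finite for some l ∈ ℕ, then S_k is finite for every positive integer k < l. -/

import Mathlib

open MeasureTheory Filter ENNReal

noncomputable def S {Ω : Type*} [MeasurableSpace Ω] (μ : Measure Ω) (A : ℕ → Set Ω) (k : ℕ) :
    ℝ≥0∞ :=
  ∑' s : {s : Finset ℕ // s.card = k}, μ (⋂ i ∈ (s : Finset ℕ), A i)

/-- Key combinatorial inequality: `C(n,k) ≤ C(l,k) * (1 + C(n,l))` for `k ≤ l`. -/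
lemma aux_choose (k l n : ℕ) (hkl : k ≤ l) :
    n.choose k ≤ l.choose k * (1 + n.choose l) := by
  rcases le_or_gt l n with h | h
  · have h1 : n.choose k ≤ n.choose k * (n - k).choose (l - k) :=
      Nat.le_mul_of_pos_right _ (Nat.choose_pos (by omega))
    have h2 : n.choose l * l.choose k = n.choose k * (n - k).choose (l - k) :=
      Nat.choose_mul hkl
    calc n.choose k ≤ n.choose k * (n - k).choose (l - k) := h1
      _ = n.choose l * l.choose k := h2.symm
      _ ≤ l.choose k * (1 + n.choose l) := by
          rw [Nat.mul_add, Nat.mul_one, Nat.mul_comm]; omega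
  · calc n.choose k ≤ l.choose k := Nat.choose_le_choose k h.le
      _ ≤ l.choose k * (1 + n.choose l) :=
          Nat.le_mul_of_pos_right _ (by omega)

lemma aux_lower (m n : ℕ) (hm : 1 ≤ m) : n + 1 ≤ (m + n).choose m := by
  induction m with
  | zero => omega
  | succ m ih =>
    rcases Nat.eq_zero_or_pos m with rfl | hm'
    · simp [Nat.choose_one_right]
    · have : (m + 1 + n) = (m + n) + 1 := by omega
      rw [this, Nat.choose_succ_succ']
      have := ih hm'
      omega

/-- The pointwise count of `m`-subsets `s` with `ω ∈ ⋂_{i ∈ s} A i`. -/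
noncomputable def cnt {Ω : Type*} (A : ℕ → Set Ω) (m : ℕ) (ω : Ω) : ℝ≥0∞ :=
  ∑' s : {s : Finset ℕ // s.card = m}, (⋂ i ∈ (s : Finset ℕ), A i).indicator 1 ω

lemma indicator_eq_one {Ω : Type*} (A : ℕ → Set Ω) (s : Finset ℕ) (ω : Ω)
    (h : ∀ i ∈ s, ω ∈ A i) : (⋂ i ∈ s, A i).indicator (1 : Ω → ℝ≥0∞) ω = 1 := by
  rw [Set.indicator_of_mem (Set.mem_iInter₂.2 h)]; rfl

lemma indicator_eq_zero {Ω : Type*} (A : ℕ → Set Ω) (s : Finset ℕ) (ω : Ω)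
    (h : ¬ ∀ i ∈ s, ω ∈ A i) : (⋂ i ∈ s, A i).indicator (1 : Ω → ℝ≥0∞) ω = 0 := by
  exact Set.indicator_of_notMem (fun hc => h (Set.mem_iInter₂.1 hc)) _

lemma cnt_eq_of_finset {Ω : Type*} (A : ℕ → Set Ω) (m : ℕ) (ω : Ω) (T : Finset ℕ)
    (hT : ∀ i, ω ∈ A i ↔ i ∈ T) :
    cnt A m ω = (T.card.choose m : ℝ≥0∞) := by
  classical
  set F : Finset {s : Finset ℕ // s.card = m} :=
    (T.powersetCard m).subtype (fun s => s.card = m) with hF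
  have hzero : ∀ s : {s : Finset ℕ // s.card = m}, s ∉ F →
      (⋂ i ∈ (s : Finset ℕ), A i).indicator (1 : Ω → ℝ≥0∞) ω = 0 := by
    intro s hs
    apply indicator_eq_zero
    intro hall
    apply hs
    rw [hF, Finset.mem_subtype, Finset.mem_powersetCard]
    exact ⟨fun i hi => (hT i).1 (hall i hi), s.2⟩
  rw [cnt, tsum_eq_sum hzero]
  have hone : ∀ s ∈ F, (⋂ i ∈ (s : Finset ℕ), A i).indicator (1 : Ω → ℝ≥0∞) ω = 1 := by
    intro s hs
    rw [hF, Finset.mem_subtype, Finset.mem_powersetCard] at hs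
    exact indicator_eq_one A _ ω (fun i hi => (hT i).2 (hs.1 hi))
  rw [Finset.sum_congr rfl hone, Finset.sum_const, nsmul_eq_mul, mul_one]
  congr 1
  rw [hF, Finset.card_subtype, Finset.filter_true_of_mem
    (fun s hs => (Finset.mem_powersetCard.1 hs).2), Finset.card_powersetCard]

lemma cnt_eq_top {Ω : Type*} (A : ℕ → Set Ω) (m : ℕ) (hm : 1 ≤ m) (ω : Ω)
    (hinf : {i | ω ∈ A i}.Infinite) : cnt A m ω = ⊤ := by
  classical
  by_contra h
  obtain ⟨n, hn⟩ := ENNReal.exists_nat_gt h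
  obtain ⟨u, hu, hucard⟩ := hinf.exists_subset_card_eq (m + n)
  set F : Finset {s : Finset ℕ // s.card = m} :=
    (u.powersetCard m).subtype (fun s => s.card = m) with hF
  have hone : ∀ s ∈ F, (⋂ i ∈ (s : Finset ℕ), A i).indicator (1 : Ω → ℝ≥0∞) ω = 1 := by
    intro s hs
    rw [hF, Finset.mem_subtype, Finset.mem_powersetCard] at hs
    exact indicator_eq_one A _ ω (fun i hi => hu (hs.1 hi))
  have hsum : ∑ s ∈ F, (⋂ i ∈ (s : Finset ℕ), A i).indicator (1 : Ω → ℝ≥0∞) ω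
      = (F.card : ℝ≥0∞) := by
    rw [Finset.sum_congr rfl hone, Finset.sum_const, nsmul_eq_mul, mul_one]
  have hle : (F.card : ℝ≥0∞) ≤ cnt A m ω := hsum ▸ ENNReal.sum_le_tsum F
  have hcard : F.card = (m + n).choose m := by
    rw [hF, Finset.card_subtype, Finset.filter_true_of_mem
      (fun s hs => (Finset.mem_powersetCard.1 hs).2), Finset.card_powersetCard, hucard]
  have hn' : (n : ℝ≥0∞) ≤ cnt A m ω := by
    refine le_trans ?_ hle
    rw [hcard]
    exact_mod_cast le_trans (by omega) (aux_lower m n hm)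
  exact absurd hn (not_lt.2 hn')

lemma cnt_key {Ω : Type*} (A : ℕ → Set Ω) (k l : ℕ) (hkl : k ≤ l) (hl : 1 ≤ l) (ω : Ω) :
    cnt A k ω ≤ (l.choose k : ℝ≥0∞) * (1 + cnt A l ω) := by
  classical
  by_cases hfin : {i | ω ∈ A i}.Finite
  · have hT : ∀ i, ω ∈ A i ↔ i ∈ hfin.toFinset := by intro i; simp
    rw [cnt_eq_of_finset A k ω _ hT, cnt_eq_of_finset A l ω _ hT]
    have := aux_choose k l hfin.toFinset.card hkl
    calc ((hfin.toFinset.card.choose k : ℕ) : ℝ≥0∞)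
        ≤ ((l.choose k * (1 + hfin.toFinset.card.choose l) : ℕ) : ℝ≥0∞) := by exact_mod_cast this
      _ = (l.choose k : ℝ≥0∞) * (1 + (hfin.toFinset.card.choose l : ℝ≥0∞)) := by push_cast; ring
  · rw [cnt_eq_top A l hl ω hfin, add_top, ENNReal.mul_top]
    · exact le_top
    · exact_mod_cast (Nat.choose_pos hkl).ne'

lemma S_eq_lintegral {Ω : Type*} [MeasurableSpace Ω] (μ : Measure Ω) (A : ℕ → Set Ω)
    (hA : ∀ i, MeasurableSet (A i)) (m : ℕ) :
    S μ A m = ∫⁻ ω, cnt A m ω ∂μ := by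
  have hmeas : ∀ s : {s : Finset ℕ // s.card = m}, MeasurableSet (⋂ i ∈ (s : Finset ℕ), A i) :=
    fun s => MeasurableSet.biInter (Set.to_countable _) (fun i _ => hA i)
  rw [S]
  have : ∀ s : {s : Finset ℕ // s.card = m},
      μ (⋂ i ∈ (s : Finset ℕ), A i) = ∫⁻ ω, (⋂ i ∈ (s : Finset ℕ), A i).indicator 1 ω ∂μ :=
    fun s => (lintegral_indicator_one (hmeas s)).symm
  rw [tsum_congr this, ← lintegral_tsum (fun s => (measurable_one.indicator (hmeas s)).aemeasurable)]
  rfl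

/-- If `S_l < ∞` for some `l ≥ 1`, then `S_k < ∞` for every positive `k < l`. -/
theorem stmt10 {Ω : Type*} [MeasurableSpace Ω] (μ : Measure Ω) [IsProbabilityMeasure μ]
    (A : ℕ → Set Ω) (hA : ∀ i, MeasurableSet (A i))
    (l : ℕ) (hl : 1 ≤ l) (hfin : S μ A l ≠ ∞) :
    ∀ k, 1 ≤ k → k < l → S μ A k ≠ ∞ := by
  intro k hk hkl
  rw [S_eq_lintegral μ A hA] at hfin ⊢
  have hle : ∫⁻ ω, cnt A k ω ∂μ ≤ ∫⁻ ω, (l.choose k : ℝ≥0∞) * (1 + cnt A l ω) ∂μ :=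
    lintegral_mono (fun ω => cnt_key A k l hkl.le hl ω)
  have heq : ∫⁻ ω, (l.choose k : ℝ≥0∞) * (1 + cnt A l ω) ∂μ
      = (l.choose k : ℝ≥0∞) * (1 + ∫⁻ ω, cnt A l ω ∂μ) := by
    rw [lintegral_const_mul' _ _ (by exact_mod_cast ENNReal.natCast_ne_top _)]
    congr 1
    rw [lintegral_add_left measurable_const, lintegral_one, measure_univ]
  rw [heq] at hle
  intro htop
  rw [htop, top_le_iff] at hle
  have hne : (l.choose k : ℝ≥0∞) * (1 + ∫⁻ ω, cnt A l ω ∂μ) ≠ ⊤ :=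
    ENNReal.mul_ne_top (ENNReal.natCast_ne_top _) (by simp [ENNReal.add_eq_top, hfin])
  exact hne hle
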